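/- Fix integers n ≥ 1 and l ≥ 1, and for k ∈ ℤ let i_k be the unique element of {0,1,…,n} with i_k ≡ −k (mod n+1). Then for every u ∈ B_l, ẽ^max_{i_n}(ẽ^max_{i_{n−1}}(⋯(ẽ^max_{i_1} u)⋯)) = (l, 0, …, 0), i.e. applying ẽ^max_n, then ẽ^max_{n−1}, …, then ẽ^max_1 to any element of B_l yields the element with first coordinate l and all other coordinates 0. -/

import Mathlib

/-- Iterated application of a partial map: `OptIter g m a` is `g^m a`. -/
def OptIter {α : Type} (g : α → Option α) : ℕ → α → Option α
  | 0, a => some a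
  | m + 1, a => (g a).bind (OptIter g m)

/-- Apply the partial maps `g 1`, `g 2`, ..., `g m` in this order. -/
def ChainOpt {α : Type} (g : ℕ → α → Option α) (m : ℕ) (a : α) : Option α :=
  (List.range m).foldl (fun acc j => acc.bind (g (j + 1))) (some a)

/-- A set with partial Kashiwara-type operators indexed by `{0, 1, ..., n}`. -/
structure PreCrystal (n : ℕ) where
  carrier : Type
  e : Fin (n + 1) → carrier → Option carrier
  f : Fin (n + 1) → carrier → Option carrier

namespace PreCrystal

variable {n : ℕ}

/-- `ε_i(b) = max {m ≥ 0 : ẽ_i^m b is defined}`. -/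
noncomputable def eps (C : PreCrystal n) (i : Fin (n + 1)) (b : C.carrier) : ℕ :=
  sSup {m | OptIter (C.e i) m b ≠ none}

/-- `φ_i(b) = max {m ≥ 0 : f̃_i^m b is defined}`. -/
noncomputable def phi (C : PreCrystal n) (i : Fin (n + 1)) (b : C.carrier) : ℕ :=
  sSup {m | OptIter (C.f i) m b ≠ none}

/-- `ẽ_i^max b = ẽ_i^{ε_i(b)} b`. -/
noncomputable def eMax (C : PreCrystal n) (i : Fin (n + 1)) (b : C.carrier) : Option C.carrier :=
  OptIter (C.e i) (C.eps i b) b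

/-- The Weyl group operator `S_i`: `f̃_i^{φ_i(b)-ε_i(b)} b` if `φ_i(b) ≥ ε_i(b)`,
and `ẽ_i^{ε_i(b)-φ_i(b)} b` if `φ_i(b) ≤ ε_i(b)`. -/
noncomputable def S (C : PreCrystal n) (i : Fin (n + 1)) (b : C.carrier) : Option C.carrier :=
  if C.eps i b ≤ C.phi i b then OptIter (C.f i) (C.phi i b - C.eps i b) b
  else OptIter (C.e i) (C.eps i b - C.phi i b) b

/-- The tensor product `C ⊗ D` of two crystals, with the Kashiwara tensor product rule. -/
noncomputable def tensor (C D : PreCrystal n) : PreCrystal n where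
  carrier := C.carrier × D.carrier
  e := fun i p =>
    if D.eps i p.2 ≤ C.phi i p.1 then (C.e i p.1).map (fun b => (b, p.2))
    else (D.e i p.2).map (fun b => (p.1, b))
  f := fun i p =>
    if D.eps i p.2 < C.phi i p.1 then (C.f i p.1).map (fun b => (b, p.2))
    else (D.f i p.2).map (fun b => (p.1, b))

end PreCrystal

/-- Kashiwara raising operator `ẽ_i` of type `A_n^{(1)}` on `(n+1)`-tuples of
nonnegative integers (zero-indexed: coordinate `j` is `x_{j+1}`): defined iff the
coordinate at index `i` is positive, it adds 1 at index `i-1` (cyclically) and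
subtracts 1 at index `i`. -/
def eA (n : ℕ) (i : Fin (n + 1)) (x : Fin (n + 1) → ℕ) : Option (Fin (n + 1) → ℕ) :=
  if 0 < x i then
    some (Function.update (Function.update x (i - 1) (x (i - 1) + 1)) i (x i - 1))
  else none

/-- Kashiwara lowering operator `f̃_i` of type `A_n^{(1)}`: defined iff the coordinate
at index `i-1` is positive, it subtracts 1 at index `i-1` and adds 1 at index `i`. -/
def fA (n : ℕ) (i : Fin (n + 1)) (x : Fin (n + 1) → ℕ) : Option (Fin (n + 1) → ℕ) :=
  if 0 < x (i - 1) then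
    some (Function.update (Function.update x i (x i + 1)) (i - 1) (x (i - 1) - 1))
  else none

/-- The crystal operators of type `A_n^{(1)}` on all `(n+1)`-tuples; the crystal `B_l`
is the subset of tuples with coordinate sum `l`. -/
def BA (n : ℕ) : PreCrystal n where
  carrier := Fin (n + 1) → ℕ
  e := eA n
  f := fA n

/-- The unique element of `{0, ..., n}` congruent to `-k` modulo `n+1`. -/
def negIdx (n : ℕ) (k : ℤ) : Fin (n + 1) :=
  ⟨((-k) % ((n : ℤ) + 1)).toNat, by
    have h1 := Int.emod_nonneg (-k) (by omega : ((n : ℤ) + 1) ≠ 0)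
    have h2 := Int.emod_lt_of_pos (-k) (by omega : (0 : ℤ) < (n : ℤ) + 1)
    omega⟩

/-- The cyclic shift `σ : (x_1, ..., x_{n+1}) ↦ (x_2, ..., x_{n+1}, x_1)`. -/
def shiftA (n : ℕ) (x : Fin (n + 1) → ℕ) : Fin (n + 1) → ℕ := fun j => x (j + 1)

/-- The map `t(x_1, ..., x_{n+1}) = (x_n, x_{n-1}, ..., x_1)`. -/
def tA (n : ℕ) (x : Fin (n + 1) → ℕ) : Fin n → ℕ :=
  fun k => x ⟨n - 1 - (k : ℕ), by omega⟩

/-- The `(N+1)`-fold tensor power `B ⊗ ... ⊗ B`, associated to the left. -/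
noncomputable def BPow (n : ℕ) : ℕ → PreCrystal n
  | 0 => BA n
  | N + 1 => (BPow n N).tensor (BA n)

/-- The element `b_1 ⊗ ... ⊗ b_{N+1}` of the `(N+1)`-fold tensor power. -/
noncomputable def tensorOf (n : ℕ) : (N : ℕ) → (Fin (N + 1) → (Fin (n + 1) → ℕ)) → (BPow n N).carrier
  | 0, b => b 0
  | N + 1, b => (tensorOf n N (fun j => b j.castSucc), b (Fin.last (N + 1)))

/-- Membership in `B_{l_1} ⊗ ... ⊗ B_{l_{N+1}}`: each factor has coordinate sum `l_j`. -/
def memBPow (n : ℕ) : (N : ℕ) → (Fin (N + 1) → ℕ) → (BPow n N).carrier → Prop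
  | 0, l, x => ∑ j, x j = l 0
  | N + 1, l, p => memBPow n N (fun j => l j.castSucc) p.1 ∧ ∑ j, p.2 j = l (Fin.last (N + 1))

/-- The componentwise cyclic shift `σ_B = σ ⊗ ... ⊗ σ` on a tensor power. -/
noncomputable def shiftPow (n : ℕ) : (N : ℕ) → (BPow n N).carrier → (BPow n N).carrier
  | 0, x => shiftA n x
  | N + 1, p => (shiftPow n N p.1, shiftA n p.2)

section Aux

variable {n : ℕ}

lemma sub_one_ne (hn : 1 ≤ n) (i : Fin (n + 1)) : i - 1 ≠ i := by
  intro h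
  have h1 : (1 : Fin (n + 1)) = 0 := by
    have := sub_eq_self.mp h
    exact this
  have : ((1 : Fin (n + 1)) : ℕ) = 0 := by rw [h1]; rfl
  simp [Fin.val_one] at this
  omega

lemma fin_sub_one_val (hn : 1 ≤ n) (a : ℕ) (h1 : 1 ≤ a) (h2 : a < n + 1) :
    ((⟨a, h2⟩ : Fin (n + 1)) - 1) = ⟨a - 1, by omega⟩ := by
  apply Fin.ext
  rw [Fin.sub_def]
  have hv1 : ((1 : Fin (n + 1)) : ℕ) = 1 := by
    simp [Fin.val_one]; omega
  simp only [hv1]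
  show (n + 1 - 1 + a) % (n + 1) = a - 1
  have : n + 1 - 1 + a = (n + 1) + (a - 1) := by omega
  rw [this, Nat.add_mod_left, Nat.mod_eq_of_lt (by omega)]

lemma optIter_eA_le (hn : 1 ≤ n) (i : Fin (n + 1)) :
    ∀ (m : ℕ) (x : Fin (n + 1) → ℕ), m ≤ x i →
      OptIter (eA n i) m x
        = some (fun j => if j = i then x i - m
            else if j = i - 1 then x (i - 1) + m else x j) := by
  have hne := sub_one_ne hn i
  intro m
  induction m with
  | zero =>
    intro x _
    simp only [OptIter]
    congr 1
    funext j
    split_ifs with h1 h2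
    · subst h1; omega
    · subst h2; omega
    · rfl
  | succ m ih =>
    intro x hm
    have hpos : 0 < x i := by omega
    simp only [OptIter, eA, if_pos hpos, Option.bind_some]
    set x' := Function.update (Function.update x (i - 1) (x (i - 1) + 1)) i (x i - 1) with hx'
    have hxi : x' i = x i - 1 := by simp [hx']
    have hxi1 : x' (i - 1) = x (i - 1) + 1 := by
      simp [hx', Function.update_apply, hne]
    have hxo : ∀ j, j ≠ i → j ≠ i - 1 → x' j = x j := by
      intro j hji hji1
      simp [hx', Function.update_apply, hji, hji1]
    rw [ih x' (by omega)]
    congr 1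
    funext j
    by_cases h1 : j = i
    · subst h1; simp [hxi]; omega
    · by_cases h2 : j = i - 1
      · subst h2; simp [h1, hxi1]; omega
      · simp [h1, h2, hxo j h1 h2]

lemma optIter_eA_gt (i : Fin (n + 1)) :
    ∀ (m : ℕ) (x : Fin (n + 1) → ℕ), x i < m → OptIter (eA n i) m x = none := by
  intro m
  induction m with
  | zero => intro x h; omega
  | succ m ih =>
    intro x hm
    by_cases hpos : 0 < x i
    · simp only [OptIter, eA, if_pos hpos, Option.bind_some]
      apply ih
      simp
      omega
    · simp only [OptIter, eA, if_neg hpos, Option.bind_none]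

lemma eps_eA (hn : 1 ≤ n) (i : Fin (n + 1)) (x : Fin (n + 1) → ℕ) :
    (BA n).eps i x = x i := by
  unfold PreCrystal.eps
  have hset : {m | OptIter ((BA n).e i) m x ≠ none} = Set.Iic (x i) := by
    ext m
    simp only [Set.mem_setOf_eq, Set.mem_Iic]
    constructor
    · intro h
      by_contra hc
      exact h (optIter_eA_gt i m x (by omega))
    · intro h
      show OptIter (eA n i) m x ≠ none
      rw [optIter_eA_le hn i m x h]
      simp
  rw [hset, csSup_Iic]

lemma eMax_eA (hn : 1 ≤ n) (i : Fin (n + 1)) (x : Fin (n + 1) → ℕ) :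
    (BA n).eMax i x
      = some (fun j => if j = i then 0
          else if j = i - 1 then x (i - 1) + x i else x j) := by
  unfold PreCrystal.eMax
  rw [eps_eA hn i x]
  show OptIter (eA n i) (x i) x = _
  rw [optIter_eA_le hn i (x i) x le_rfl]
  congr 1
  funext j
  split_ifs <;> omega

lemma chainOpt_succ {α : Type} (g : ℕ → α → Option α) (m : ℕ) (a : α) :
    ChainOpt g (m + 1) a = (ChainOpt g m a).bind (g (m + 1)) := by
  simp [ChainOpt, List.range_succ]

lemma negIdx_eq (hn : 1 ≤ n) (j : ℕ) (hj : j < n) :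
    negIdx n (((j + 1 : ℕ) : ℤ)) = ⟨n - j, by omega⟩ := by
  apply Fin.ext
  show ((-(((j + 1 : ℕ) : ℤ))) % ((n : ℤ) + 1)).toNat = n - j
  have hc : (((j + 1 : ℕ) : ℤ)) = (j : ℤ) + 1 := by push_cast; ring
  rw [hc]
  have h1 : (-(((j : ℤ)) + 1) + ((n : ℤ) + 1) * 1) % ((n : ℤ) + 1)
      = (-(((j : ℤ)) + 1)) % ((n : ℤ) + 1) := Int.add_mul_emod_self_left _ _ _
  rw [← h1]
  have h2 : (-(((j : ℤ)) + 1) + ((n : ℤ) + 1) * 1) = (n : ℤ) - j := by ring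
  rw [h2, Int.emod_eq_of_lt (by omega) (by omega)]
  omega

end Aux


/-- Tail sum of `u` over indices `≥ n - j`. -/
def Tl (n : ℕ) (u : Fin (n + 1) → ℕ) (j : ℕ) : ℕ :=
  ∑ m : Fin (n + 1), if n - j ≤ (m : ℕ) then u m else 0

/-- The state after `j` steps of the chain. -/
def Stl (n : ℕ) (u : Fin (n + 1) → ℕ) (j : ℕ) : Fin (n + 1) → ℕ := fun m =>
  if (m : ℕ) < n - j then u m else if (m : ℕ) = n - j then Tl n u j else 0

lemma tl_step (n : ℕ) (u : Fin (n + 1) → ℕ) (j : ℕ) (hj : j < n) :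
    Tl n u (j + 1) = u ⟨n - j - 1, by omega⟩ + Tl n u j := by
  set c : Fin (n + 1) := ⟨n - j - 1, by omega⟩ with hc
  have key : Tl n u (j + 1) = ∑ m : Fin (n + 1),
      ((if m = c then u m else 0) + (if n - j ≤ (m : ℕ) then u m else 0)) := by
    apply Finset.sum_congr rfl
    intro m _
    have hcm : m = c ↔ (m : ℕ) = n - j - 1 := by rw [hc, Fin.ext_iff]
    split_ifs with h1 h2 h3 h2 h3 <;>
      first
      | rfl
      | (exfalso; rw [hcm] at *; omega)
      | (rw [hcm] at *; omega)
  rw [key, Finset.sum_add_distrib, Finset.sum_ite_eq' Finset.univ c u,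
    if_pos (Finset.mem_univ c)]
  rfl

lemma stl_zero (n : ℕ) (u : Fin (n + 1) → ℕ) : Stl n u 0 = u := by
  funext m
  simp only [Stl]
  by_cases h1 : (m : ℕ) < n
  · rw [if_pos (by omega)]
  · have hisLt := m.isLt
    have hm : (m : ℕ) = n := by omega
    rw [if_neg (by omega), if_pos (by omega)]
    show Tl n u 0 = u m
    rw [Tl]
    have key : ∀ m' : Fin (n + 1),
        (if n - 0 ≤ (m' : ℕ) then u m' else 0) = (if m' = m then u m' else 0) := by
      intro m'
      have h2 := m'.isLt
      have hx : m' = m ↔ (m' : ℕ) = n := by rw [Fin.ext_iff, hm]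
      by_cases h : (m' : ℕ) = n
      · rw [if_pos (by omega), if_pos (hx.mpr h)]
      · rw [if_neg (by omega), if_neg (fun hh => h (hx.mp hh))]
    rw [Finset.sum_congr rfl (fun m' _ => key m'),
      Finset.sum_ite_eq' Finset.univ m u, if_pos (Finset.mem_univ m)]

lemma stl_last (n l : ℕ) (hn : 1 ≤ n) (u : Fin (n + 1) → ℕ) (hu : ∑ j, u j = l) :
    Stl n u n = fun j => if j = (0 : Fin (n + 1)) then l else 0 := by
  funext m
  simp only [Stl]
  have hm0 : m = (0 : Fin (n + 1)) ↔ (m : ℕ) = 0 := by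
    rw [Fin.ext_iff, Fin.val_zero]
  rw [if_neg (by omega)]
  by_cases h : (m : ℕ) = n - n
  · rw [if_pos h, if_pos (hm0.mpr (by omega))]
    show Tl n u n = l
    rw [Tl, ← hu]
    apply Finset.sum_congr rfl
    intro m' _
    rw [if_pos (by omega)]
  · rw [if_neg h, if_neg (fun hh => h (by rw [hm0] at hh; omega))]

lemma stl_step (n : ℕ) (u : Fin (n + 1) → ℕ) (hn : 1 ≤ n) (j : ℕ) (hj : j < n)
    (i : Fin (n + 1)) (hiv : (i : ℕ) = n - j) :
    (fun m => if m = i then 0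
      else if m = i - 1 then Stl n u j (i - 1) + Stl n u j i
      else Stl n u j m) = Stl n u (j + 1) := by
  have hisLt : (i : ℕ) < n + 1 := i.isLt
  have hi1v : ((i - 1 : Fin (n + 1)) : ℕ) = n - j - 1 := by
    have hmk : i = ⟨(i : ℕ), hisLt⟩ := rfl
    rw [hmk, fin_sub_one_val hn (i : ℕ) (by omega) hisLt]
    show (i : ℕ) - 1 = n - j - 1
    omega
  funext m
  have hmi : m = i ↔ (m : ℕ) = n - j := by rw [Fin.ext_iff, hiv]
  have hmi1 : m = i - 1 ↔ (m : ℕ) = n - j - 1 := by rw [Fin.ext_iff, hi1v]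
  by_cases h1 : (m : ℕ) = n - j
  · rw [if_pos (hmi.mpr h1)]
    show 0 = Stl n u (j + 1) m
    simp only [Stl]
    rw [if_neg (by omega), if_neg (by omega)]
  · rw [if_neg (fun h => h1 (hmi.mp h))]
    by_cases h2 : (m : ℕ) = n - j - 1
    · rw [if_pos (hmi1.mpr h2)]
      have e1 : Stl n u j (i - 1) = u (i - 1) := by
        simp only [Stl, hi1v]
        rw [if_pos (by omega)]
      have e2 : Stl n u j i = Tl n u j := by
        simp [Stl, hiv]
      have e3 : (i - 1 : Fin (n + 1)) = ⟨n - j - 1, by omega⟩ := Fin.ext (by exact hi1v)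
      rw [e1, e2, e3]
      show u ⟨n - j - 1, by omega⟩ + Tl n u j = Stl n u (j + 1) m
      simp only [Stl]
      rw [if_neg (by omega), if_pos (by omega)]
      exact (tl_step n u j hj).symm
    · rw [if_neg (fun h => h2 (hmi1.mp h))]
      show Stl n u j m = Stl n u (j + 1) m
      simp only [Stl]
      by_cases h3 : (m : ℕ) < n - j
      · rw [if_pos h3, if_pos (by omega)]
      · rw [if_neg h3, if_neg h1, if_neg (by omega), if_neg (by omega)]

/-- Equation (2.10) for type `A_n^{(1)}`: with `i_k ≡ -k (mod n+1)`, applying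
`ẽ^max_{i_1} = ẽ^max_n`, then `ẽ^max_{i_2} = ẽ^max_{n-1}`, …, then `ẽ^max_{i_n} = ẽ^max_1`
to any `u ∈ B_l` yields `δ_l[1] = (l, 0, …, 0)`. -/

theorem stmt8 (n l : ℕ) (hn : 1 ≤ n) (hl : 1 ≤ l) (u : Fin (n + 1) → ℕ)
    (hu : ∑ j, u j = l) :
    ChainOpt (fun k => (BA n).eMax (negIdx n k)) n u
      = some (fun j => if j = (0 : Fin (n + 1)) then l else 0) := by
  have key : ∀ j, j ≤ n →
      ChainOpt (fun k => (BA n).eMax (negIdx n k)) j u = some (Stl n u j) := by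
    intro j
    induction j with
    | zero =>
      intro _
      rw [stl_zero n u]
      rfl
    | succ j ih =>
      intro hj1
      have hj : j < n := by omega
      erw [chainOpt_succ]
      rw [ih (by omega)]
      erw [Option.bind_some]
      rw [negIdx_eq hn j hj, eMax_eA hn,
        stl_step n u hn j hj ⟨n - j, by omega⟩ rfl]
  rw [key n le_rfl, stl_last n l hn u hu]
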